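/- Variance of the magnetization: for the magnetization chain (S_t) of the Curie-Weiss Glauber dynamics, there is a constant C > 0 (depending only on β) such that for all n, all t ≥ 0, and all starting states: if β < 1 then Var(S_t) ≤ C/n, and if β = 1 then Var(S_t) ≤ C·t/n². -/

import Mathlib

open Filter Real

namespace CW

noncomputable section

/-- `p₊(s) = (1 + tanh(βs))/2`. -/
def pPlus (β s : ℝ) : ℝ := (1 + Real.tanh (β * s)) / 2

/-- `p₋(s) = (1 - tanh(βs))/2`. -/
def pMinus (β s : ℝ) : ℝ := (1 - Real.tanh (β * s)) / 2

/-- The value of the magnetization corresponding to `k` plus spins among `n`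
sites: the state space `Ω_S = {-1, -1 + 2/n, …, 1 - 2/n, 1}` is indexed by
`k ∈ {0, 1, …, n}`, with `magVal n k = (2k - n)/n`. -/
def magVal (n : ℕ) (k : Fin (n + 1)) : ℝ := (2 * (k : ℕ) - n) / n

/-- Transition kernel of the magnetization chain of the Curie-Weiss Glauber
dynamics: from `s` move to `s - 2/n` with probability `((1+s)/2) p₋(s - 1/n)`,
to `s + 2/n` with probability `((1-s)/2) p₊(s + 1/n)`, and stay put
otherwise. -/
def magKernel (β : ℝ) (n : ℕ) (k l : Fin (n + 1)) : ℝ :=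
  if (l : ℕ) + 1 = (k : ℕ) then
    ((1 + magVal n k) / 2) * pMinus β (magVal n k - 1 / n)
  else if (k : ℕ) + 1 = (l : ℕ) then
    ((1 - magVal n k) / 2) * pPlus β (magVal n k + 1 / n)
  else if l = k then
    1 - ((1 + magVal n k) / 2) * pMinus β (magVal n k - 1 / n)
      - ((1 - magVal n k) / 2) * pPlus β (magVal n k + 1 / n)
  else 0

/-- Law of the magnetization chain at time `t` started from `k`. -/
def magLaw (β : ℝ) (n : ℕ) : ℕ → Fin (n + 1) → Fin (n + 1) → ℝ
  | 0, k, l => if l = k then 1 else 0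
  | t + 1, k, l => ∑ m, magLaw β n t k m * magKernel β n m l

/-- Mean of `S_t` for the chain started from `k`. -/
def magMean (β : ℝ) (n t : ℕ) (k : Fin (n + 1)) : ℝ :=
  ∑ l, magLaw β n t k l * magVal n l

/-- Variance of `S_t` for the chain started from `k`. -/
def magVar (β : ℝ) (n t : ℕ) (k : Fin (n + 1)) : ℝ :=
  (∑ l, magLaw β n t k l * (magVal n l) ^ 2) - (magMean β n t k) ^ 2

lemma tanh_hasDerivAt (x : ℝ) : HasDerivAt Real.tanh (1 - Real.tanh x ^ 2) x := by
  have h : Real.tanh = fun x => Real.sinh x / Real.cosh x :=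
    funext fun x => Real.tanh_eq_sinh_div_cosh x
  rw [h]
  have := (Real.hasDerivAt_sinh x).fun_div (Real.hasDerivAt_cosh x) (Real.cosh_pos x).ne'
  refine this.congr_deriv ?_
  have hc := (Real.cosh_pos x).ne'
  have hsq := Real.cosh_sq_sub_sinh_sq x
  beta_reduce
  field_simp

lemma abs_tanh_le_one (x : ℝ) : |Real.tanh x| ≤ 1 := by
  rw [Real.tanh_eq_sinh_div_cosh, abs_div, abs_of_pos (Real.cosh_pos x),
    div_le_one (Real.cosh_pos x)]
  nlinarith [Real.cosh_sq_sub_sinh_sq x, abs_nonneg (Real.sinh x), sq_abs (Real.sinh x),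
    Real.cosh_pos x]

lemma tanh_monotone : Monotone Real.tanh := by
  apply monotone_of_deriv_nonneg
  · exact fun x => (tanh_hasDerivAt x).differentiableAt
  · intro x
    rw [(tanh_hasDerivAt x).deriv]
    nlinarith [abs_tanh_le_one x, sq_abs (Real.tanh x), abs_nonneg (Real.tanh x)]

lemma tanh_lipschitz (x y : ℝ) : |Real.tanh x - Real.tanh y| ≤ |x - y| := by
  have := Convex.norm_image_sub_le_of_norm_hasDerivWithin_le
    (f := Real.tanh) (f' := fun x => 1 - Real.tanh x ^ 2) (s := Set.univ) (C := 1)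
    (fun z _ => (tanh_hasDerivAt z).hasDerivWithinAt)
    (fun z _ => by
      simp only [Real.norm_eq_abs]
      rw [abs_le]
      constructor <;> nlinarith [abs_tanh_le_one z, sq_abs (Real.tanh z), abs_nonneg (Real.tanh z)])
    convex_univ (Set.mem_univ y) (Set.mem_univ x)
  simpa [Real.norm_eq_abs] using this



def Acoef (β : ℝ) (n : ℕ) (s : ℝ) : ℝ := ((1 + s) / 2) * pMinus β (s - 1 / n)
def Bcoef (β : ℝ) (n : ℕ) (s : ℝ) : ℝ := ((1 - s) / 2) * pPlus β (s + 1 / n)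

lemma magVal_zero {n : ℕ} (hn : 0 < n) (k : Fin (n+1)) (hk : (k : ℕ) = 0) :
    magVal n k = -1 := by
  have : (n : ℝ) ≠ 0 := Nat.cast_ne_zero.mpr hn.ne'
  field_simp [magVal, hk]
  rw [magVal, hk]; field_simp; simp

lemma magVal_top {n : ℕ} (hn : 0 < n) (k : Fin (n+1)) (hk : (k : ℕ) = n) :
    magVal n k = 1 := by
  have : (n : ℝ) ≠ 0 := Nat.cast_ne_zero.mpr hn.ne'
  rw [magVal, hk]
  field_simp
  ring

lemma abs_magVal_le_one {n : ℕ} (hn : 0 < n) (k : Fin (n+1)) : |magVal n k| ≤ 1 := by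
  have h : (0:ℝ) < n := Nat.cast_pos.mpr hn
  have hk : ((k:ℕ):ℝ) ≤ n := by exact_mod_cast Nat.le_of_lt_succ k.isLt
  have hk0 : (0:ℝ) ≤ ((k:ℕ):ℝ) := Nat.cast_nonneg _
  rw [magVal, abs_div, abs_of_pos h, div_le_one h, abs_le]
  constructor <;> nlinarith

lemma magKernel_eq (β : ℝ) (n : ℕ) (k l : Fin (n + 1)) :
    magKernel β n k l
      = (if (l : ℕ) + 1 = (k : ℕ) then Acoef β n (magVal n k) else 0)
      + (if (k : ℕ) + 1 = (l : ℕ) then Bcoef β n (magVal n k) else 0)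
      + (if l = k then 1 - Acoef β n (magVal n k) - Bcoef β n (magVal n k) else 0) := by
  rw [magKernel, Acoef, Bcoef]
  simp only [Fin.ext_iff]
  split_ifs with h1 h2 h3 h2 h3 h3 <;>
    first
      | (exfalso; omega)
      | ring

lemma sum_kernel_phi {β : ℝ} {n : ℕ} (hn : 0 < n) (k : Fin (n + 1)) (φ : ℝ → ℝ) :
    ∑ l, magKernel β n k l * φ (magVal n l)
      = Acoef β n (magVal n k) * φ (magVal n k - 2 / n)
      + Bcoef β n (magVal n k) * φ (magVal n k + 2 / n)
      + (1 - Acoef β n (magVal n k) - Bcoef β n (magVal n k)) * φ (magVal n k) := by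
  have hnR : (n : ℝ) ≠ 0 := Nat.cast_ne_zero.mpr hn.ne'
  simp only [magKernel_eq, add_mul, Finset.sum_add_distrib]
  congr 1
  · congr 1
    · -- A term
      rcases Nat.eq_zero_or_pos (k : ℕ) with hk | hk
      · rw [Finset.sum_eq_zero, magVal_zero hn k hk]
        · rw [Acoef]; ring
        · intro l _
          rw [if_neg (by omega)]; ring
      · have hk1 : (k : ℕ) - 1 < n + 1 := by omega
        rw [Finset.sum_eq_single ⟨(k : ℕ) - 1, hk1⟩]
        · rw [if_pos (by simp; omega)]
          congr 2
          rw [magVal, magVal]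
          push_cast [Nat.cast_sub (by omega : 1 ≤ (k:ℕ))]
          field_simp
          ring
        · intro l _ hl
          rw [if_neg]
          · ring
          · intro hc
            apply hl
            apply Fin.ext
            simp
            omega
        · intro h; exact absurd (Finset.mem_univ _) h
    · -- B term
      rcases eq_or_lt_of_le (Nat.le_of_lt_succ k.isLt) with hk | hk
      · rw [Finset.sum_eq_zero, magVal_top hn k hk]
        · rw [Bcoef]; ring
        · intro l _
          rw [if_neg (by omega)]; ring
      · have hk1 : (k : ℕ) + 1 < n + 1 := by omega
        rw [Finset.sum_eq_single ⟨(k : ℕ) + 1, hk1⟩]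
        · rw [if_pos (by simp)]
          congr 2
          rw [magVal, magVal]
          push_cast
          field_simp
          ring
        · intro l _ hl
          rw [if_neg]
          · ring
          · intro hc
            apply hl
            apply Fin.ext
            simp
            omega
        · intro h; exact absurd (Finset.mem_univ _) h
  · -- diagonal
    rw [Finset.sum_eq_single k]
    · rw [if_pos rfl]
    · intro l _ hl; rw [if_neg hl]; ring
    · intro h; exact absurd (Finset.mem_univ _) h



lemma pPlus_mem (β s : ℝ) : 0 ≤ pPlus β s ∧ pPlus β s ≤ 1 := by
  have := abs_tanh_le_one (β * s)
  rw [abs_le] at this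
  constructor <;> [skip; skip] <;> rw [pPlus] <;> linarith [this.1, this.2]

lemma pMinus_mem (β s : ℝ) : 0 ≤ pMinus β s ∧ pMinus β s ≤ 1 := by
  have := abs_tanh_le_one (β * s)
  rw [abs_le] at this
  constructor <;> rw [pMinus] <;> linarith [this.1, this.2]

lemma Acoef_nonneg {β : ℝ} {n : ℕ} {s : ℝ} (hs : |s| ≤ 1) : 0 ≤ Acoef β n s := by
  rw [abs_le] at hs
  exact mul_nonneg (by linarith [hs.1]) (pMinus_mem β _).1

lemma Bcoef_nonneg {β : ℝ} {n : ℕ} {s : ℝ} (hs : |s| ≤ 1) : 0 ≤ Bcoef β n s := by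
  rw [abs_le] at hs
  exact mul_nonneg (by linarith [hs.2]) (pPlus_mem β _).1

lemma AB_le_one {β : ℝ} {n : ℕ} {s : ℝ} (hs : |s| ≤ 1) : Acoef β n s + Bcoef β n s ≤ 1 := by
  rw [abs_le] at hs
  have h1 := pMinus_mem β (s - 1/(n:ℝ))
  have h2 := pPlus_mem β (s + 1/(n:ℝ))
  rw [Acoef, Bcoef]
  nlinarith [h1.1, h1.2, h2.1, h2.2, hs.1, hs.2]

lemma magKernel_nonneg {β : ℝ} {n : ℕ} (hn : 0 < n) (k l : Fin (n + 1)) :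
    0 ≤ magKernel β n k l := by
  have hs := abs_magVal_le_one hn k
  have hA := Acoef_nonneg (β := β) (n := n) hs
  have hB := Bcoef_nonneg (β := β) (n := n) hs
  have hAB := AB_le_one (β := β) (n := n) hs
  rw [magKernel_eq]
  split_ifs <;> simp only [Acoef, Bcoef] at * <;> linarith

lemma magKernel_row_sum {β : ℝ} {n : ℕ} (hn : 0 < n) (k : Fin (n + 1)) :
    ∑ l, magKernel β n k l = 1 := by
  have := sum_kernel_phi (β := β) hn k (fun _ => 1)
  simpa using this

lemma magLaw_nonneg {β : ℝ} {n : ℕ} (hn : 0 < n) (t : ℕ) (k l : Fin (n + 1)) :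
    0 ≤ magLaw β n t k l := by
  induction t generalizing l with
  | zero => rw [magLaw]; split_ifs <;> norm_num
  | succ t ih =>
    rw [magLaw]
    exact Finset.sum_nonneg fun m _ => mul_nonneg (ih m) (magKernel_nonneg hn m l)

lemma magLaw_sum {β : ℝ} {n : ℕ} (hn : 0 < n) (t : ℕ) (k : Fin (n + 1)) :
    ∑ l, magLaw β n t k l = 1 := by
  induction t with
  | zero => simp [magLaw]
  | succ t ih =>
    simp only [magLaw]
    rw [Finset.sum_comm]
    calc ∑ m, ∑ l, magLaw β n t k m * magKernel β n m l
        = ∑ m, magLaw β n t k m * ∑ l, magKernel β n m l := by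
          simp [Finset.mul_sum]
      _ = 1 := by simp only [magKernel_row_sum hn]; simpa using ih

lemma abs_magMean_le_one {β : ℝ} {n : ℕ} (hn : 0 < n) (t : ℕ) (k : Fin (n + 1)) :
    |magMean β n t k| ≤ 1 := by
  rw [magMean]
  calc |∑ l, magLaw β n t k l * magVal n l| ≤ ∑ l, |magLaw β n t k l * magVal n l| :=
        Finset.abs_sum_le_sum_abs _ _
    _ ≤ ∑ l, magLaw β n t k l := by
        apply Finset.sum_le_sum
        intro l _
        rw [abs_mul, abs_of_nonneg (magLaw_nonneg hn t k l)]
        calc magLaw β n t k l * |magVal n l| ≤ magLaw β n t k l * 1 :=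
              mul_le_mul_of_nonneg_left (abs_magVal_le_one hn l) (magLaw_nonneg hn t k l)
          _ = _ := mul_one _
    _ = 1 := magLaw_sum hn t k

def Gfun (β : ℝ) (n : ℕ) (s : ℝ) : ℝ := s + 2 / n * (Bcoef β n s - Acoef β n s)

lemma tanh_aff_hasDerivAt (β c s : ℝ) :
    HasDerivAt (fun s => Real.tanh (β * (s + c))) (β * (1 - Real.tanh (β * (s + c)) ^ 2)) s := by
  have hinner : HasDerivAt (fun s : ℝ => β * (s + c)) β s := by
    simpa using ((hasDerivAt_id s).add_const c).const_mul β
  have := (tanh_hasDerivAt (β * (s + c))).comp s hinner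
  simpa [mul_comm, Function.comp_def] using this

lemma Gfun_hasDerivAt (β : ℝ) (n : ℕ) (s : ℝ) :
    HasDerivAt (Gfun β n)
      (1 + 2 / n *
        ((-(1 : ℝ) / 2 * ((1 + Real.tanh (β * (s + 1 / n))) / 2)
            + (1 - s) / 2 * (β * (1 - Real.tanh (β * (s + 1 / n)) ^ 2) / 2))
          - ((1 : ℝ) / 2 * ((1 - Real.tanh (β * (s - 1 / n))) / 2)
            + (1 + s) / 2 * (-(β * (1 - Real.tanh (β * (s - 1 / n)) ^ 2)) / 2)))) s := by
  have hB : HasDerivAt (fun s => Bcoef β n s)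
      (-(1 : ℝ) / 2 * ((1 + Real.tanh (β * (s + 1 / n))) / 2)
        + (1 - s) / 2 * (β * (1 - Real.tanh (β * (s + 1 / n)) ^ 2) / 2)) s := by
    have hf : HasDerivAt (fun s : ℝ => (1 - s) / 2) (-(1 : ℝ) / 2) s := by
      simpa using ((hasDerivAt_const s (1:ℝ)).sub (hasDerivAt_id s)).div_const 2
    have hg : HasDerivAt (fun s => (1 + Real.tanh (β * (s + 1 / n))) / 2)
        (β * (1 - Real.tanh (β * (s + 1 / n)) ^ 2) / 2) s :=
      ((tanh_aff_hasDerivAt β (1 / n) s).const_add 1).div_const 2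
    simpa [Bcoef, pPlus, Pi.mul_def] using hf.mul hg
  have hA : HasDerivAt (fun s => Acoef β n s)
      ((1 : ℝ) / 2 * ((1 - Real.tanh (β * (s - 1 / n))) / 2)
        + (1 + s) / 2 * (-(β * (1 - Real.tanh (β * (s - 1 / n)) ^ 2)) / 2)) s := by
    have hf : HasDerivAt (fun s : ℝ => (1 + s) / 2) ((1 : ℝ) / 2) s := by
      simpa using ((hasDerivAt_const s (1:ℝ)).add (hasDerivAt_id s)).div_const 2
    have htanh : HasDerivAt (fun s => Real.tanh (β * (s - 1 / n)))
        (β * (1 - Real.tanh (β * (s - 1 / n)) ^ 2)) s := by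
      simpa [sub_eq_add_neg] using tanh_aff_hasDerivAt β (-(1 / n)) s
    have hg : HasDerivAt (fun s => (1 - Real.tanh (β * (s - 1 / n))) / 2)
        (-(β * (1 - Real.tanh (β * (s - 1 / n)) ^ 2)) / 2) s := by
      simpa using ((hasDerivAt_const s (1:ℝ)).sub htanh).div_const 2
    simpa [Acoef, pMinus, Pi.mul_def] using hf.mul hg
  have := (hasDerivAt_id s).add ((hB.sub hA).const_mul (2 / (n : ℝ)))
  have hG : Gfun β n = fun i => i + 2 / (n:ℝ) * (Bcoef β n i - Acoef β n i) := rfl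
  rw [hG]
  simpa [Pi.add_def] using this

lemma deriv_bound (β u s a b : ℝ) (hβ0 : 0 ≤ β) (hβ1 : β ≤ 1) (hu : 0 < u) (hu1 : u ≤ 1)
    (hs : |s| ≤ 1) (ha : |a| ≤ 1) (hb : |b| ≤ 1) (hba : b ≤ a) (hab : a - b ≤ 2 * β * u) :
    |1 - u + u / 2 * ((b - a) + (1 - s) * β * (1 - a ^ 2) + (1 + s) * β * (1 - b ^ 2))|
      ≤ 1 - (1 - β) * u := by
  rw [abs_le] at *
  obtain ⟨hs1, hs2⟩ := hs
  obtain ⟨ha1, ha2⟩ := ha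
  obtain ⟨hb1, hb2⟩ := hb
  constructor
  · nlinarith [mul_nonneg (mul_nonneg (by linarith : (0:ℝ) ≤ 1 - s) hβ0) (by nlinarith : (0:ℝ) ≤ 1 - a^2),
      mul_nonneg (mul_nonneg (by linarith : (0:ℝ) ≤ 1 + s) hβ0) (by nlinarith : (0:ℝ) ≤ 1 - b^2),
      mul_nonneg (mul_nonneg hβ0 hu.le) (by linarith : (0:ℝ) ≤ 1 - u)]
  · nlinarith [mul_nonneg (mul_nonneg (by linarith : (0:ℝ) ≤ 1 - s) hβ0) (by nlinarith : (0:ℝ) ≤ a^2),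
      mul_nonneg (mul_nonneg (by linarith : (0:ℝ) ≤ 1 + s) hβ0) (by nlinarith : (0:ℝ) ≤ b^2),
      hu.le]

lemma Gfun_lipschitz {β : ℝ} {n : ℕ} (hn : 0 < n) (hβ0 : 0 ≤ β) (hβ1 : β ≤ 1)
    {x y : ℝ} (hx : x ∈ Set.Icc (-1 : ℝ) 1) (hy : y ∈ Set.Icc (-1 : ℝ) 1) :
    |Gfun β n x - Gfun β n y| ≤ (1 - (1 - β) / n) * |x - y| := by
  have hnR : (0 : ℝ) < n := Nat.cast_pos.mpr hn
  have hn1 : (1 : ℝ) ≤ n := by exact_mod_cast hn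
  set f' : ℝ → ℝ := fun z =>
      (1 + 2 / n *
        ((-(1 : ℝ) / 2 * ((1 + Real.tanh (β * (z + 1 / n))) / 2)
            + (1 - z) / 2 * (β * (1 - Real.tanh (β * (z + 1 / n)) ^ 2) / 2))
          - ((1 : ℝ) / 2 * ((1 - Real.tanh (β * (z - 1 / n))) / 2)
            + (1 + z) / 2 * (-(β * (1 - Real.tanh (β * (z - 1 / n)) ^ 2)) / 2)))) with hf'
  have key := Convex.norm_image_sub_le_of_norm_hasDerivWithin_le
    (f := Gfun β n) (f' := f') (s := Set.Icc (-1 : ℝ) 1) (C := 1 - (1 - β) / n)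
    (fun z _ => (Gfun_hasDerivAt β n z).hasDerivWithinAt)
    (fun z hz => by
      simp only [Real.norm_eq_abs, hf']
      set a := Real.tanh (β * (z + 1 / n)) with hadef
      set b := Real.tanh (β * (z - 1 / n)) with hbdef
      have heq : 1 + 2 / (n:ℝ) *
          ((-(1 : ℝ) / 2 * ((1 + a) / 2) + (1 - z) / 2 * (β * (1 - a ^ 2) / 2))
            - ((1 : ℝ) / 2 * ((1 - b) / 2) + (1 + z) / 2 * (-(β * (1 - b ^ 2)) / 2)))
          = 1 - 1/n + (1/n) / 2 * ((b - a) + (1 - z) * β * (1 - a ^ 2) + (1 + z) * β * (1 - b ^ 2)) := by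
        field_simp
        ring
      rw [heq]
      have h1 : (1 - β) / (n:ℝ) = (1 - β) * (1/n) := by ring
      rw [h1]
      apply deriv_bound β (1/n) z a b hβ0 hβ1 (by positivity)
        (by rw [div_le_one hnR]; exact hn1)
        (abs_le.mpr ⟨hz.1, hz.2⟩) (abs_tanh_le_one _) (abs_tanh_le_one _)
      · exact tanh_monotone (by nlinarith [one_div_pos.mpr hnR])
      · calc a - b ≤ |a - b| := le_abs_self _
          _ ≤ |β * (z + 1/n) - β * (z - 1/n)| := tanh_lipschitz _ _
          _ = 2 * β * (1/n) := by
              have h2 : β * (z + 1/(n:ℝ)) - β * (z - 1/n) = 2 * β * (1/n) := by ring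
              rw [h2, abs_of_nonneg (by positivity)])
    (convex_Icc _ _) hy hx
  simpa [Real.norm_eq_abs] using key

lemma moment1 {β : ℝ} {n : ℕ} (hn : 0 < n) (k : Fin (n+1)) :
    ∑ l, magKernel β n k l * magVal n l = Gfun β n (magVal n k) := by
  have h := sum_kernel_phi (β := β) hn k (fun x => x)
  beta_reduce at h
  rw [h, Gfun]
  ring

lemma moment2_le {β : ℝ} {n : ℕ} (hn : 0 < n) (k : Fin (n+1)) :
    ∑ l, magKernel β n k l * (magVal n l) ^ 2
      ≤ (Gfun β n (magVal n k)) ^ 2 + 4 / (n : ℝ) ^ 2 := by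
  have h := sum_kernel_phi (β := β) hn k (fun x => x ^ 2)
  beta_reduce at h
  rw [h, Gfun]
  have hs := abs_magVal_le_one hn k
  have hA := Acoef_nonneg (β := β) (n := n) hs
  have hB := Bcoef_nonneg (β := β) (n := n) hs
  have hAB := AB_le_one (β := β) (n := n) hs
  have hnR : (0 : ℝ) < n := Nat.cast_pos.mpr hn
  have hc : (2 / (n:ℝ)) ^ 2 = 4 / (n:ℝ) ^ 2 := by field_simp; ring
  set s := magVal n k
  set A := Acoef β n s
  set B := Bcoef β n s
  set c : ℝ := 2 / (n:ℝ) with hcdef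
  nlinarith [sq_nonneg (B - A), mul_nonneg (sq_nonneg c) (sq_nonneg (B - A)),
    mul_nonneg (mul_nonneg (sq_nonneg c) hA) hB,
    mul_nonneg (sq_nonneg c) (sub_nonneg.mpr hAB)]

lemma law_step {β : ℝ} {n : ℕ} (t : ℕ) (k : Fin (n+1)) (f : Fin (n+1) → ℝ) :
    ∑ l, magLaw β n (t+1) k l * f l
      = ∑ m, magLaw β n t k m * ∑ l, magKernel β n m l * f l := by
  simp only [magLaw]
  calc ∑ l, (∑ m, magLaw β n t k m * magKernel β n m l) * f l
      = ∑ l, ∑ m, magLaw β n t k m * (magKernel β n m l * f l) := by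
        simp [Finset.sum_mul, mul_assoc]
    _ = ∑ m, ∑ l, magLaw β n t k m * (magKernel β n m l * f l) := Finset.sum_comm
    _ = _ := by simp [Finset.mul_sum]

lemma var_step {β : ℝ} {n : ℕ} (hn : 0 < n) (hβ0 : 0 ≤ β) (hβ1 : β ≤ 1) (t : ℕ)
    (k : Fin (n+1)) :
    magVar β n (t+1) k
      ≤ (1 - (1 - β) / n) ^ 2 * magVar β n t k + 4 / (n : ℝ) ^ 2 := by
  set L : ℝ := 1 - (1 - β) / n with hLdef
  set μ : Fin (n+1) → ℝ := magLaw β n t k with hμdef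
  have hμ0 : ∀ l, 0 ≤ μ l := fun l => magLaw_nonneg hn t k l
  have hμ1 : ∑ l, μ l = 1 := magLaw_sum hn t k
  set G : Fin (n+1) → ℝ := fun l => Gfun β n (magVal n l) with hGdef
  have h2 : ∑ l, magLaw β n (t+1) k l * (magVal n l) ^ 2
      ≤ (∑ l, μ l * (G l) ^ 2) + 4 / (n : ℝ) ^ 2 := by
    rw [law_step]
    calc ∑ m, μ m * ∑ l, magKernel β n m l * (magVal n l) ^ 2
        ≤ ∑ m, μ m * ((G m) ^ 2 + 4 / (n : ℝ) ^ 2) := by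
          apply Finset.sum_le_sum
          intro m _
          exact mul_le_mul_of_nonneg_left (moment2_le hn m) (hμ0 m)
      _ = (∑ l, μ l * (G l) ^ 2) + 4 / (n : ℝ) ^ 2 := by
          rw [Finset.sum_congr rfl (fun m _ => mul_add (μ m) _ _),
            Finset.sum_add_distrib, ← Finset.sum_mul, hμ1, one_mul]
  have h1 : magMean β n (t+1) k = ∑ l, μ l * G l := by
    rw [magMean, law_step]
    exact Finset.sum_congr rfl fun m _ => by rw [moment1 hn m]
  -- variance of G under μ
  set m₀ : ℝ := magMean β n t k with hm₀
  set c : ℝ := Gfun β n m₀ with hcdef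
  have hGvar : (∑ l, μ l * (G l) ^ 2) - (∑ l, μ l * G l) ^ 2
      ≤ L ^ 2 * magVar β n t k := by
    have e1 : ∑ l, μ l * (G l - c) ^ 2
        = (∑ l, μ l * (G l) ^ 2) - 2 * c * (∑ l, μ l * G l) + c ^ 2 := by
      calc ∑ l, μ l * (G l - c) ^ 2
          = ∑ l, (μ l * (G l) ^ 2 - 2 * c * (μ l * G l) + c ^ 2 * μ l) :=
            Finset.sum_congr rfl fun l _ => by ring
        _ = _ := by
            rw [Finset.sum_add_distrib, Finset.sum_sub_distrib, ← Finset.mul_sum,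
              ← Finset.mul_sum, hμ1, mul_one]
    have e2 : ∑ l, μ l * (magVal n l - m₀) ^ 2
        = (∑ l, μ l * (magVal n l) ^ 2) - m₀ ^ 2 := by
      have hmean : ∑ l, μ l * magVal n l = m₀ := rfl
      calc ∑ l, μ l * (magVal n l - m₀) ^ 2
          = ∑ l, (μ l * (magVal n l) ^ 2 - 2 * m₀ * (μ l * magVal n l) + m₀ ^ 2 * μ l) :=
            Finset.sum_congr rfl fun l _ => by ring
        _ = _ := by
            rw [Finset.sum_add_distrib, Finset.sum_sub_distrib, ← Finset.mul_sum,
              ← Finset.mul_sum, hμ1, mul_one, hmean]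
            ring
    have e3 : ∑ l, μ l * (G l - c) ^ 2 ≤ ∑ l, μ l * (L ^ 2 * (magVal n l - m₀) ^ 2) := by
      apply Finset.sum_le_sum
      intro l _
      apply mul_le_mul_of_nonneg_left _ (hμ0 l)
      have hxy := Gfun_lipschitz hn hβ0 hβ1
        (Set.mem_Icc.mpr (abs_le.mp (abs_magVal_le_one hn l)))
        (Set.mem_Icc.mpr (abs_le.mp (abs_magMean_le_one (β := β) hn t k)))
      calc (G l - c) ^ 2 = |Gfun β n (magVal n l) - Gfun β n m₀| ^ 2 := by
            rw [sq_abs]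
        _ ≤ (L * |magVal n l - m₀|) ^ 2 := by
            apply pow_le_pow_left₀ (abs_nonneg _) hxy
        _ = L ^ 2 * (magVal n l - m₀) ^ 2 := by rw [mul_pow, sq_abs]
    have e4 : ∑ l, μ l * (L ^ 2 * (magVal n l - m₀) ^ 2)
        = L ^ 2 * ((∑ l, μ l * (magVal n l) ^ 2) - m₀ ^ 2) := by
      rw [← e2, Finset.mul_sum]
      exact Finset.sum_congr rfl fun l _ => by ring
    have e5 : magVar β n t k = (∑ l, μ l * (magVal n l) ^ 2) - m₀ ^ 2 := rfl
    nlinarith [sq_nonneg ((∑ l, μ l * G l) - c)]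
  have hvar : magVar β n (t+1) k
      = (∑ l, magLaw β n (t+1) k l * (magVal n l) ^ 2) - (∑ l, μ l * G l) ^ 2 := by
    rw [magVar, h1]
  rw [hvar]
  have h3 := sub_le_sub_right h2 ((∑ l, μ l * G l) ^ 2)
  refine le_trans h3 ?_
  calc (∑ l, μ l * (G l) ^ 2) + 4 / (n : ℝ) ^ 2 - (∑ l, μ l * G l) ^ 2
      = ((∑ l, μ l * (G l) ^ 2) - (∑ l, μ l * G l) ^ 2) + 4 / (n : ℝ) ^ 2 := by ring
    _ ≤ L ^ 2 * magVar β n t k + 4 / (n : ℝ) ^ 2 := add_le_add_left hGvar _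

lemma magVar_zero_time (β : ℝ) (n : ℕ) (k : Fin (n+1)) : magVar β n 0 k = 0 := by
  simp [magVar, magMean, magLaw]

lemma magVar_n_zero (β : ℝ) (t : ℕ) (k : Fin 1) : magVar β 0 t k = 0 := by
  have hv : ∀ l : Fin 1, magVal 0 l = 0 := fun l => by simp [magVal]
  simp [magVar, magMean, hv]


/-- Variance of the magnetization: there is a constant `C > 0` depending only
on `β` such that for all `n`, all times `t` and all starting states, if
`β < 1` then `Var(S_t) ≤ C/n`, and if `β = 1` then `Var(S_t) ≤ C t / n²`. -/
theorem mag_variance (β : ℝ) (hβ : 0 ≤ β) :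
    ∃ C > (0 : ℝ), ∀ (n t : ℕ) (k : Fin (n + 1)),
      (β < 1 → magVar β n t k ≤ C / n) ∧
      (β = 1 → magVar β n t k ≤ C * t / (n : ℝ) ^ 2) := by
  refine ⟨max 4 (4 / (1 - β)), lt_of_lt_of_le (by norm_num) (le_max_left _ _), ?_⟩
  intro n t k
  constructor
  · intro hβ1
    rcases Nat.eq_zero_or_pos n with hn | hn
    · subst hn
      rw [magVar_n_zero]
      simp
    · have hnR : (0 : ℝ) < n := Nat.cast_pos.mpr hn
      have hβ' : (0 : ℝ) < 1 - β := by linarith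
      have key : ∀ t, magVar β n t k ≤ 4 / ((1 - β) * n) := by
        intro t
        induction t with
        | zero => rw [magVar_zero_time]; positivity
        | succ t ih =>
          have hstep := var_step hn hβ hβ1.le t k
          obtain ⟨L, hL⟩ : ∃ L : ℝ, L = 1 - (1 - β) / n := ⟨_, rfl⟩
          rw [← hL] at hstep
          have hL1 : L ≤ 1 := by
            rw [hL]
            have h0 : (0 : ℝ) ≤ (1 - β) / n := by positivity
            linarith
          have hL0 : 0 ≤ L := by
            rw [hL]
            have hn1 : (1 : ℝ) ≤ n := by exact_mod_cast hn
            rw [sub_nonneg, div_le_one hnR]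
            linarith
          have hM0 : (0 : ℝ) ≤ 4 / ((1 - β) * n) := by positivity
          have hkey : (1 - L) * (4 / ((1 - β) * n)) = 4 / (n : ℝ) ^ 2 := by
            rw [hL]
            field_simp
            ring
          nlinarith [mul_le_mul_of_nonneg_left ih (sq_nonneg L),
            mul_nonneg hM0 (mul_nonneg hL0 (sub_nonneg.mpr hL1))]
      calc magVar β n t k ≤ 4 / ((1 - β) * n) := key t
        _ = (4 / (1 - β)) / n := by rw [div_div]
        _ ≤ max 4 (4 / (1 - β)) / n := by gcongr; exact le_max_right _ _
  · intro hβeq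
    subst hβeq
    rcases Nat.eq_zero_or_pos n with hn | hn
    · subst hn
      rw [magVar_n_zero]
      norm_num
    · have hnR : (0 : ℝ) < n := Nat.cast_pos.mpr hn
      have key : ∀ t, magVar 1 n t k ≤ 4 * t / (n : ℝ) ^ 2 := by
        intro t
        induction t with
        | zero => rw [magVar_zero_time]; positivity
        | succ t ih =>
          have hstep := var_step hn (by norm_num) le_rfl t k
          have hL : (1 - (1 - (1 : ℝ)) / n) = 1 := by norm_num
          rw [hL, one_pow, one_mul] at hstep
          calc magVar 1 n (t + 1) k ≤ magVar 1 n t k + 4 / (n : ℝ) ^ 2 := hstep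
            _ ≤ 4 * t / (n : ℝ) ^ 2 + 4 / (n : ℝ) ^ 2 := by linarith
            _ = 4 * ((t : ℝ) + 1) / (n : ℝ) ^ 2 := by ring
            _ = 4 * ((t + 1 : ℕ) : ℝ) / (n : ℝ) ^ 2 := by push_cast; ring
      calc magVar 1 n t k ≤ 4 * t / (n : ℝ) ^ 2 := key t
        _ ≤ max 4 (4 / (1 - 1)) * t / (n : ℝ) ^ 2 := by
          gcongr
          exact le_max_left _ _


end

end CW
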